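/- Let k = 6/5 and define f_k(z) = ((1+k)/2 − z)^((1+k)/(2k)) · (z + (k−1)/2)^((k−1)/(2k)) for z ∈ [0,1]. Then for every z ∈ [0,1], 1 + f_k(1−z) + ∫_z^1 (1−t)/f_k(t) dt ≤ 1.901. -/

import Mathlib

private lemma fk_deriv (t : ℝ) (h1 : (0:ℝ) < t + 1/10) (h2 : (0:ℝ) < 11/10 - t) :
    HasDerivAt (fun u : ℝ => (u + 1/10) ^ ((11:ℝ)/12) * (11/10 - u) ^ ((1:ℝ)/12))
      ((1 - t) / ((11/10 - t) ^ ((11:ℝ)/12) * (t + 1/10) ^ ((1:ℝ)/12))) t := by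
  have hA : HasDerivAt (fun u : ℝ => u + 1/10) 1 t := by
    simpa using (hasDerivAt_id t).add_const (1/10)
  have hB : HasDerivAt (fun u : ℝ => 11/10 - u) (-1) t := by
    simpa using (hasDerivAt_id t).const_sub (11/10)
  have hA' := hA.rpow_const (p := (11:ℝ)/12) (Or.inl h1.ne')
  have hB' := hB.rpow_const (p := (1:ℝ)/12) (Or.inl h2.ne')
  have key := hA'.mul hB'
  refine HasDerivAt.congr_deriv key ?_
  symm
  set A := (t + 1/10) ^ ((11:ℝ)/12) with hAdef
  set B := (11/10 - t) ^ ((1:ℝ)/12) with hBdef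
  set C := (11/10 - t) ^ ((11:ℝ)/12) with hCdef
  set D := (t + 1/10) ^ ((1:ℝ)/12) with hDdef
  set E := (t + 1/10) ^ ((11:ℝ)/12 - 1) with hEdef
  set F := (11/10 - t) ^ ((1:ℝ)/12 - 1) with hFdef
  have hCpos : 0 < C := Real.rpow_pos_of_pos h2 _
  have hDpos : 0 < D := Real.rpow_pos_of_pos h1 _
  have had : A * D = t + 1/10 := by
    rw [hAdef, hDdef, ← Real.rpow_add h1]; norm_num
  have hbc : B * C = 11/10 - t := by
    rw [hBdef, hCdef, ← Real.rpow_add h2]; norm_num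
  have hE : E * (t + 1/10) = A := by
    rw [hEdef, hAdef, ← Real.rpow_add_one h1.ne' ((11:ℝ)/12 - 1)]; norm_num
  have hF : F * (11/10 - t) = B := by
    rw [hFdef, hBdef, ← Real.rpow_add_one h2.ne' ((1:ℝ)/12 - 1)]; norm_num
  rw [div_eq_iff (by positivity : ((11/10 - t) ^ ((11:ℝ)/12) * (t + 1/10) ^ ((1:ℝ)/12)) ≠ 0)]
  apply mul_left_cancel₀ (show (t + 1/10) * (11/10 - t) ≠ 0 by positivity)
  linear_combination (-(11/12)*B*C*D*(11/10-t))*hE + ((1/12)*A*C*D*(t+1/10))*hF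
    + ((-(11/12)*(11/10-t)+(1/12)*(t+1/10))*B*C)*had
    + ((-(11/12)*(11/10-t)+(1/12)*(t+1/10))*(t+1/10))*hbc

theorem fk_ratio_bound (k : ℝ) (hk : k = 6 / 5) (f : ℝ → ℝ)
    (hf : ∀ z, f z = ((1 + k) / 2 - z) ^ ((1 + k) / (2 * k)) *
                     (z + (k - 1) / 2) ^ ((k - 1) / (2 * k))) :
    ∀ z ∈ Set.Icc (0:ℝ) 1,
      1 + f (1 - z) + (∫ t in z..1, (1 - t) / f t) ≤ 1.901 := by
  subst hk
  have hf' : ∀ x : ℝ, f x = (11/10 - x) ^ ((11:ℝ)/12) * (x + 1/10) ^ ((1:ℝ)/12) := by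
    intro x
    rw [hf x]
    norm_num
  intro z hz
  obtain ⟨hz0, hz1⟩ := hz
  -- FTC: the integral telescopes
  have hderiv : ∀ t ∈ Set.uIcc z 1,
      HasDerivAt (fun u : ℝ => f (1 - u)) ((1 - t) / f t) t := by
    intro t ht
    rw [Set.uIcc_of_le hz1] at ht
    have h1 : (0:ℝ) < t + 1/10 := by nlinarith [ht.1]
    have h2 : (0:ℝ) < 11/10 - t := by nlinarith [ht.2]
    have heq : (fun u : ℝ => f (1 - u)) =
        fun u : ℝ => (u + 1/10) ^ ((11:ℝ)/12) * (11/10 - u) ^ ((1:ℝ)/12) := by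
      funext u
      rw [hf' (1 - u)]
      norm_num
      ring_nf
    rw [heq, hf' t]
    exact fk_deriv t h1 h2
  have hcont : ContinuousOn (fun t : ℝ => (1 - t) / f t) (Set.uIcc z 1) := by
    rw [Set.uIcc_of_le hz1]
    apply ContinuousOn.div
    · exact (continuous_const.sub continuous_id).continuousOn
    · have hfe : f = fun x : ℝ => (11/10 - x) ^ ((11:ℝ)/12) * (x + 1/10) ^ ((1:ℝ)/12) :=
        funext hf'
      rw [hfe]
      apply ContinuousOn.mul
      · apply ContinuousOn.rpow_const
        · exact (continuous_const.sub continuous_id).continuousOn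
        · intro y hy; right; norm_num
      · apply ContinuousOn.rpow_const
        · exact (continuous_id.add continuous_const).continuousOn
        · intro y hy; right; norm_num
    · intro x hx
      rw [hf' x]
      have h1 : (0:ℝ) < x + 1/10 := by nlinarith [hx.1, hz0]
      have h2 : (0:ℝ) < 11/10 - x := by nlinarith [hx.2]
      positivity
  have hint : IntervalIntegrable (fun t : ℝ => (1 - t) / f t) MeasureTheory.volume z 1 :=
    hcont.intervalIntegrable
  have hFTC : (∫ t in z..1, (1 - t) / f t) = f (1 - 1) - f (1 - z) :=
    intervalIntegral.integral_eq_sub_of_hasDerivAt hderiv hint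
  rw [hFTC]
  have hf0 : f (1 - 1) = (11/10:ℝ) ^ ((11:ℝ)/12) * (1/10:ℝ) ^ ((1:ℝ)/12) := by
    rw [hf']; norm_num
  rw [hf0]
  -- numeric bound
  have hnum : (11/10:ℝ) ^ ((11:ℝ)/12) * (1/10:ℝ) ^ ((1:ℝ)/12) ≤ 0.901 := by
    set a : ℝ := (11/10:ℝ) ^ ((11:ℝ)/12) * (1/10:ℝ) ^ ((1:ℝ)/12) with ha
    have hpow : a ^ (12:ℕ) = (11/10:ℝ)^(11:ℕ) * (1/10:ℝ) := by
      rw [ha, mul_pow, ← Real.rpow_natCast ((11/10:ℝ) ^ ((11:ℝ)/12)) 12,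
          ← Real.rpow_natCast ((1/10:ℝ) ^ ((1:ℝ)/12)) 12,
          ← Real.rpow_mul (by norm_num), ← Real.rpow_mul (by norm_num)]
      norm_num
    have h12 : a ^ (12:ℕ) ≤ (0.901:ℝ) ^ (12:ℕ) := by rw [hpow]; norm_num
    exact le_of_pow_le_pow_left₀ (by norm_num) (by norm_num) h12
  linarith
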